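/- Let a₁, a₂ ∈ ℝ, α₁, α₂ > 0, and let κ₁, κ₂ ∈ ℝ be arbitrary. Let σ ∈ (0,1), δ ∈ (0,1), N ≥ 1 and C₄ > 0. Define φ₄(x,y) = C₄(−x + N|y|^{2(1−σ)δ}) on U₄ = {(x,y) : −1 < x < N and |y| > 1}. Then φ₄ is a Lyapunov function for L on U₄; in particular there exist C₄′, D₄ > 0 with (Lφ₄)(x,y) ≤ −C₄′·φ₄(x,y) + D₄ for all (x,y) ∈ U₄. -/

import Mathlib

noncomputable def Lop (a₁ a₂ α₁ α₂ κ₁ κ₂ : ℝ) (Φ : ℝ × ℝ → ℝ) (p : ℝ × ℝ) : ℝ :=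
  (a₁ * p.1 - α₁ * p.1 ^ 2 + p.2 ^ 2) * deriv (fun t => Φ (t, p.2)) p.1
    + (a₂ * p.2 - α₂ * p.1 * p.2) * deriv (fun t => Φ (p.1, t)) p.2
    + κ₁ * deriv (deriv (fun t => Φ (t, p.2))) p.1
    + κ₂ * deriv (deriv (fun t => Φ (p.1, t))) p.2

/-- `φ` is a Lyapunov function for the operator `L` (with the given parameters) on `U`:
(I) `φ` is `C^∞` on `U`; (II) `φ z → ∞` as `|z| → ∞`, `z ∈ U`;
(III) there are `C, D > 0` with `Lφ ≤ -C•φ + D` on `U`. -/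
def IsLyapunovOn (a₁ a₂ α₁ α₂ κ₁ κ₂ : ℝ) (φ : ℝ × ℝ → ℝ) (U : Set (ℝ × ℝ)) : Prop :=
  ContDiffOn ℝ (⊤ : ℕ∞) φ U ∧
    (∀ M : ℝ, ∃ R : ℝ, ∀ z ∈ U, R < ‖z‖ → M < φ z) ∧
    (∃ C > (0:ℝ), ∃ D > (0:ℝ), ∀ z ∈ U, Lop a₁ a₂ α₁ α₂ κ₁ κ₂ φ z ≤ -C * φ z + D)
noncomputable def phi4 (C₄ N σ δ : ℝ) (p : ℝ × ℝ) : ℝ :=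
  C₄ * (-p.1 + N * |p.2| ^ (2 * (1 - σ) * δ))

def U4 (N : ℝ) : Set (ℝ × ℝ) := {p : ℝ × ℝ | -1 < p.1 ∧ p.1 < N ∧ 1 < |p.2|}

lemma sq_rpow_half (t c : ℝ) : (t^2 : ℝ) ^ (c/2) = |t| ^ c := by
  rw [← sq_abs, ← Real.rpow_natCast |t| 2, ← Real.rpow_mul (abs_nonneg t)]
  congr 1; ring

lemma hasDerivAt_pow_rpow (c : ℝ) (t : ℝ) (ht : t ≠ 0) :
    HasDerivAt (fun u : ℝ => (u^2) ^ c) (2 * c * t * (t^2)^(c-1)) t := by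
  have h1 : HasDerivAt (fun u : ℝ => u^2) (2*t) t := by simpa using hasDerivAt_pow 2 t
  have h2 : HasDerivAt (fun x : ℝ => x ^ c) (c * (t^2)^(c-1)) (t^2) :=
    Real.hasDerivAt_rpow_const (Or.inl (pow_ne_zero 2 ht))
  have h3 := HasDerivAt.comp (𝕜 := ℝ) (h := fun u : ℝ => u^2) (h₂ := fun x : ℝ => x ^ c) t h2 h1
  refine h3.congr_deriv (Eq.symm ?_)
  ring

noncomputable def gfun (β : ℝ) : ℝ → ℝ := fun t => β * (t * (t^2) ^ (β/2 - 1))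

lemma hasDerivAt_g (β t : ℝ) (ht : t ≠ 0) :
    HasDerivAt (fun u : ℝ => (u^2) ^ (β/2)) (gfun β t) t := by
  have h := hasDerivAt_pow_rpow (β/2) t ht
  convert h using 1
  unfold gfun; ring_nf

lemma rpow_shift (c t : ℝ) (ht : t ≠ 0) : t^2 * (t^2) ^ c = (t^2) ^ (c+1) := by
  have h0 : (0:ℝ) < t^2 := by positivity
  calc t^2 * (t^2)^c = (t^2)^(1:ℝ) * (t^2)^c := by rw [Real.rpow_one]
  _ = (t^2)^(1 + c) := (Real.rpow_add h0 _ _).symm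
  _ = (t^2)^(c+1) := by congr 1; ring

lemma hasDerivAt_gfun (β t : ℝ) (ht : t ≠ 0) :
    HasDerivAt (gfun β) (β * (β-1) * (t^2) ^ (β/2 - 1)) t := by
  have hin : HasDerivAt (fun u : ℝ => (u^2) ^ (β/2-1)) (2 * (β/2-1) * t * (t^2)^((β/2-1)-1)) t :=
    hasDerivAt_pow_rpow (β/2-1) t ht
  have h1 : HasDerivAt (fun u : ℝ => u * ((u^2) ^ (β/2-1)))
      (1 * (t^2)^(β/2-1) + t * (2 * (β/2-1) * t * (t^2)^((β/2-1)-1))) t :=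
    (hasDerivAt_id t).mul hin
  have h2 := h1.const_mul β
  refine h2.congr_deriv (Eq.symm ?_)
  have hs : t^2 * (t^2)^(β/2-2) = (t^2)^(β/2-1) := by
    have := rpow_shift (β/2-2) t ht
    rwa [show β/2-2+1 = β/2-1 by ring] at this
  have he : (β/2-1)-1 = β/2-2 := by ring
  rw [he]
  linear_combination (2*β - β^2) * hs

lemma rpow_sub_sq_le (β c t : ℝ) (hβ0 : 0 < β) (hβ2 : β < 2) (hc : 0 < c) (ht : 1 ≤ t) :
    c * t ^ β - t ^ 2 ≤ c * (max 1 ((2*c) ^ ((2-β)⁻¹))) ^ β := by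
  set T := max 1 ((2*c) ^ ((2-β)⁻¹)) with hT
  have hT1 : (1:ℝ) ≤ T := le_max_left _ _
  have hTβ : (0:ℝ) < T ^ β := Real.rpow_pos_of_pos (by linarith) β
  have ht0 : (0:ℝ) < t := by linarith
  rcases le_or_gt t T with h | h
  · have h1 : t ^ β ≤ T ^ β := Real.rpow_le_rpow (by linarith) h hβ0.le
    nlinarith [sq_nonneg t]
  · have h2c : 2*c ≤ t ^ (2-β) := by
      have h1 : ((2*c) ^ ((2-β)⁻¹)) ^ (2-β) ≤ t ^ (2-β) := by
        apply Real.rpow_le_rpow (Real.rpow_nonneg (by linarith) _) _ (by linarith)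
        exact le_trans (le_max_right _ _) h.le
      rwa [← Real.rpow_mul (by linarith : (0:ℝ) ≤ 2*c),
        inv_mul_cancel₀ (by linarith : (2:ℝ)-β ≠ 0), Real.rpow_one] at h1
    have hmul : t ^ (2-β) * t ^ β = t ^ 2 := by
      rw [← Real.rpow_add ht0]
      norm_num
    have htβ : (0:ℝ) < t ^ β := Real.rpow_pos_of_pos ht0 β
    nlinarith [mul_le_mul_of_nonneg_right h2c htβ.le]

set_option maxHeartbeats 1000000 in
/-- `φ₄` is a Lyapunov function on `U₄`. -/
theorem statement5 (a₁ a₂ α₁ α₂ κ₁ κ₂ σ δ N C₄ : ℝ)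
    (hα₁ : 0 < α₁) (hα₂ : 0 < α₂)
    (hσ₁ : 0 < σ) (hσ₂ : σ < 1) (hδ₁ : 0 < δ) (hδ₂ : δ < 1)
    (hN : 1 ≤ N) (hC₄ : 0 < C₄) :
    IsLyapunovOn a₁ a₂ α₁ α₂ κ₁ κ₂ (phi4 C₄ N σ δ) (U4 N) ∧
      ∃ C₄' > (0:ℝ), ∃ D₄ > (0:ℝ), ∀ p ∈ U4 N,
        Lop a₁ a₂ α₁ α₂ κ₁ κ₂ (phi4 C₄ N σ δ) p ≤ -C₄' * phi4 C₄ N σ δ p + D₄ := by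
  have h1σ : (0:ℝ) < 1 - σ := by linarith
  obtain ⟨β, hβdef⟩ : ∃ β : ℝ, β = 2 * (1 - σ) * δ := ⟨_, rfl⟩
  have hβ0 : 0 < β := by rw [hβdef]; positivity
  have hβ2 : β < 2 := by rw [hβdef]; nlinarith
  have hN0 : (0:ℝ) < N := by linarith
  -- constants
  obtain ⟨c1, hc1def⟩ : ∃ c1 : ℝ, c1 = N * (2 * (|a₂| + α₂ * N) + 1) := ⟨_, rfl⟩
  have hc1 : 0 < c1 := by rw [hc1def]; positivity
  obtain ⟨T₀, hT₀def⟩ : ∃ T₀ : ℝ, T₀ = max 1 ((2*c1) ^ ((2-β)⁻¹)) := ⟨_, rfl⟩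
  have hT₀1 : (1:ℝ) ≤ T₀ := hT₀def ▸ le_max_left _ _
  have hT₀β : (0:ℝ) < T₀ ^ β := Real.rpow_pos_of_pos (by linarith) β
  obtain ⟨D, hDdef⟩ :
      ∃ D : ℝ, D = C₄ * ((|a₁| + 1) * N + α₁ * N^2 + 2 * |κ₂| * N + c1 * T₀ ^ β) + 1 :=
    ⟨_, rfl⟩
  have hD : 0 < D := by
    rw [hDdef]
    have h1 : (0:ℝ) ≤ (|a₁| + 1) * N + α₁ * N^2 + 2 * |κ₂| * N + c1 * T₀ ^ β := by
      have := abs_nonneg a₁; have := abs_nonneg κ₂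
      nlinarith [mul_le_mul_of_nonneg_left hT₀β.le hc1.le]
    nlinarith
  -- key inequality
  have hkey : ∀ p ∈ U4 N, Lop a₁ a₂ α₁ α₂ κ₁ κ₂ (phi4 C₄ N σ δ) p ≤
      -1 * phi4 C₄ N σ δ p + D := by
    rintro ⟨x, y⟩ ⟨hx1, hx2, hy1⟩
    replace hx1 : -1 < x := hx1
    replace hx2 : x < N := hx2
    replace hy1 : 1 < |y| := hy1
    have hy : y ≠ 0 := by intro h; rw [h] at hy1; norm_num at hy1
    have hxN : |x| ≤ N := abs_le.2 ⟨by linarith, hx2.le⟩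
    -- derivatives in the first variable
    have hdx : ∀ t : ℝ, HasDerivAt (fun s => phi4 C₄ N σ δ (s, y)) (-C₄) t := by
      intro t
      have h0 : (fun s : ℝ => phi4 C₄ N σ δ (s, y))
          = fun s => C₄ * (-s + N * |y| ^ (2 * (1 - σ) * δ)) := rfl
      rw [h0]
      have := (((hasDerivAt_id t).neg).add_const (N * |y| ^ (2 * (1 - σ) * δ))).const_mul C₄
      refine this.congr_deriv (Eq.symm ?_); ring
    have hdx1 : deriv (fun t => phi4 C₄ N σ δ (t, y)) x = -C₄ := (hdx x).deriv
    have hdx2 : deriv (deriv (fun t => phi4 C₄ N σ δ (t, y))) x = 0 := by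
      have h0 : deriv (fun t => phi4 C₄ N σ δ (t, y)) = fun _ => -C₄ := by
        funext t; exact (hdx t).deriv
      rw [h0]; simp
    -- derivatives in the second variable
    have hdy : ∀ t : ℝ, t ≠ 0 →
        HasDerivAt (fun s => phi4 C₄ N σ δ (x, s)) (C₄ * (N * gfun β t)) t := by
      intro t ht
      have h0 : (fun s : ℝ => phi4 C₄ N σ δ (x, s))
          = fun s => C₄ * (-x + N * ((s^2) ^ (β/2))) := by
        funext s
        show C₄ * (-x + N * |s| ^ (2 * (1 - σ) * δ)) = _
        rw [sq_rpow_half, hβdef]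
      rw [h0]
      exact (((hasDerivAt_g β t ht).const_mul N).const_add (-x)).const_mul C₄
    have hdy1 : deriv (fun t => phi4 C₄ N σ δ (x, t)) y = C₄ * (N * gfun β y) :=
      (hdy y hy).deriv
    have hev : (deriv fun s => phi4 C₄ N σ δ (x, s)) =ᶠ[nhds y] fun t => C₄ * (N * gfun β t) := by
      filter_upwards [isOpen_compl_singleton.mem_nhds (show y ∈ ({0}ᶜ : Set ℝ) from hy)] with t ht
      exact (hdy t ht).deriv
    have hdy2 : deriv (deriv (fun t => phi4 C₄ N σ δ (x, t))) y
        = C₄ * (N * (β * (β-1) * (y^2) ^ (β/2-1))) := by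
      rw [hev.deriv_eq]
      exact (((hasDerivAt_gfun β y hy).const_mul N).const_mul C₄).deriv
    simp only [Lop]
    rw [hdx1, hdx2, hdy1, hdy2]
    clear hdx hdx1 hdx2 hdy hdy1 hdy2 hev
    -- abbreviations
    obtain ⟨A, hAdef⟩ : ∃ A : ℝ, A = (y^2) ^ (β/2) := ⟨_, rfl⟩
    obtain ⟨B, hBdef⟩ : ∃ B : ℝ, B = (y^2) ^ (β/2-1) := ⟨_, rfl⟩
    have hφp : phi4 C₄ N σ δ (x, y) = C₄ * (-x + N * A) := by
      rw [hAdef, sq_rpow_half, hβdef]; rfl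
    have hAB : y^2 * B = A := by
      rw [hAdef, hBdef]
      have := rpow_shift (β/2-1) y hy
      rwa [show β/2-1+1 = β/2 by ring] at this
    have hAabs : A = |y| ^ β := by rw [hAdef, sq_rpow_half]
    have hA1 : 1 < A := by
      rw [hAabs]
      have := Real.rpow_lt_rpow (by norm_num) hy1 hβ0
      rwa [Real.one_rpow] at this
    have hB1 : B ≤ 1 := by
      have hb : B = |y| ^ (β - 2) := by
        rw [hBdef, show β/2-1 = (β-2)/2 by ring, sq_rpow_half]
      rw [hb]
      exact Real.rpow_le_one_of_one_le_of_nonpos hy1.le (by linarith)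
    have hB0 : 0 < B := by
      rw [hBdef]; exact Real.rpow_pos_of_pos (by positivity) _
    -- bound pieces
    have h1 : -(a₁*x) - x ≤ (|a₁| + 1)*N := by
      have e1 : -((a₁+1)*x) ≤ |(a₁+1)*x| := neg_le_abs _
      have e2 : |(a₁+1)*x| = |a₁+1| * |x| := abs_mul _ _
      have e3 : |a₁+1| ≤ |a₁| + 1 := (abs_add_le a₁ 1).trans (by norm_num)
      have e4 : |a₁+1| * |x| ≤ (|a₁| + 1) * N :=
        mul_le_mul e3 hxN (abs_nonneg _) (by positivity)
      nlinarith
    have h2 : α₁ * x^2 ≤ α₁ * N^2 := by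
      rcases abs_le.1 hxN with ⟨ha, hb⟩
      exact mul_le_mul_of_nonneg_left (sq_le_sq' ha hb) hα₁.le
    have h3 : κ₂ * (β*(β-1)) * B * N ≤ 2 * |κ₂| * N := by
      have hββ : |β*(β-1)| ≤ 2 := by
        rw [abs_mul]
        have hb1 : |β| ≤ 2 := abs_le.2 ⟨by linarith, by linarith⟩
        have hb2 : |β-1| ≤ 1 := abs_le.2 ⟨by linarith, by linarith⟩
        nlinarith [abs_nonneg β, abs_nonneg (β-1)]
      have e1 : κ₂ * (β*(β-1)) * B ≤ |κ₂ * (β*(β-1)) * B| := le_abs_self _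
      rw [abs_mul, abs_mul, abs_of_pos hB0] at e1
      have e2a : |κ₂| * |β*(β-1)| ≤ |κ₂| * 2 := mul_le_mul_of_nonneg_left hββ (abs_nonneg κ₂)
      have e2b : |κ₂| * |β*(β-1)| * B ≤ |κ₂| * |β*(β-1)| * 1 :=
        mul_le_mul_of_nonneg_left hB1 (mul_nonneg (abs_nonneg κ₂) (abs_nonneg (β*(β-1))))
      have e3 : κ₂ * (β*(β-1)) * B ≤ 2 * |κ₂| := by nlinarith
      exact mul_le_mul_of_nonneg_right e3 hN0.le
    have h4 : N * (β*(a₂ - α₂*x) + 1) * A ≤ c1 * A := by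
      have ha : a₂ - α₂*x ≤ |a₂| + α₂*N := by
        have := le_abs_self a₂
        rcases abs_le.1 hxN with ⟨hxa, hxb⟩
        nlinarith
      have hK : 0 ≤ |a₂| + α₂*N := by positivity
      have hb : β*(a₂ - α₂*x) ≤ 2*(|a₂| + α₂*N) := by
        rcases le_or_gt (a₂ - α₂*x) 0 with hs | hs
        · nlinarith
        · nlinarith
      have hc : N * (β*(a₂ - α₂*x) + 1) ≤ c1 := by rw [hc1def]; nlinarith
      nlinarith [mul_le_mul_of_nonneg_right hc (by linarith : (0:ℝ) ≤ A)]
    have h5 : c1 * A - y^2 ≤ c1 * T₀ ^ β := by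
      have := rpow_sub_sq_le β c1 |y| hβ0 hβ2 hc1 hy1.le
      rwa [sq_abs, ← hAabs, ← hT₀def] at this
    -- assemble
    rw [hφp]
    simp only [gfun]
    rw [show (y^2 : ℝ) ^ (β/2-1) = B from hBdef.symm]
    have hterm2 : (a₂*y - α₂*x*y) * (C₄ * (N * (β * (y * B)))) = C₄*N*β*((a₂-α₂*x)*A) := by
      linear_combination (C₄*N*β*(a₂-α₂*x)) * hAB
    rw [hterm2]
    have hsum : C₄ * (-(a₁*x) + α₁*x^2 - y^2 + N*(β*(a₂-α₂*x)+1)*A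
          + κ₂*(β*(β-1))*B*N - x)
        ≤ C₄ * ((|a₁| + 1)*N + α₁*N^2 + 2 * |κ₂| * N + c1 * T₀ ^ β) :=
      mul_le_mul_of_nonneg_left (by linarith) hC₄.le
    rw [hDdef]
    linarith only [hsum]
  refine ⟨⟨?_, ?_, ⟨1, one_pos, D, hD, hkey⟩⟩, ⟨1, one_pos, D, hD, hkey⟩⟩
  · -- smoothness
    have hφ : phi4 C₄ N σ δ = fun p : ℝ × ℝ => C₄ * (-p.1 + N * ((p.2^2) ^ (β/2))) := by
      funext p
      show C₄ * (-p.1 + N * |p.2| ^ (2 * (1 - σ) * δ)) = _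
      rw [sq_rpow_half, hβdef]
    rw [hφ]
    intro p hp
    have hy : p.2 ≠ 0 := by
      intro h
      have h2 := hp.2.2
      rw [h] at h2; norm_num at h2
    apply ContDiffAt.contDiffWithinAt
    have h1 : ContDiffAt ℝ (⊤:ℕ∞) (fun q : ℝ×ℝ => (q.2)^2) p := (contDiff_snd.pow 2).contDiffAt
    have h2 : ContDiffAt ℝ (⊤:ℕ∞) (fun q : ℝ×ℝ => ((q.2)^2) ^ (β/2)) p :=
      h1.rpow_const_of_ne (pow_ne_zero 2 hy)
    exact contDiffAt_const.mul ((contDiff_fst.contDiffAt.neg).add (contDiffAt_const.mul h2))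
  · -- growth
    intro M
    obtain ⟨T, hTdef⟩ : ∃ T : ℝ, T = max 1 ((M / C₄ + N) / N + 1) := ⟨_, rfl⟩
    refine ⟨max N (T ^ (β⁻¹)), ?_⟩
    rintro ⟨x, y⟩ ⟨hx1, hx2, hy1⟩ hR
    replace hx1 : -1 < x := hx1
    replace hx2 : x < N := hx2
    replace hy1 : 1 < |y| := hy1
    have hxN : |x| ≤ N := abs_le.2 ⟨by linarith, hx2.le⟩
    have hT1 : (1:ℝ) ≤ T := hTdef ▸ le_max_left _ _
    have hTr : (M / C₄ + N) / N + 1 ≤ T := hTdef ▸ le_max_right _ _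
    have hnorm : ‖((x,y) : ℝ×ℝ)‖ = max |x| |y| := by
      rw [Prod.norm_def]; simp [Real.norm_eq_abs]
    have hyR : T ^ (β⁻¹) < |y| := by
      rw [hnorm] at hR
      by_contra h
      push_neg at h
      have hmax : max |x| |y| ≤ max N (T ^ (β⁻¹)) :=
        max_le (hxN.trans (le_max_left _ _)) (h.trans (le_max_right _ _))
      linarith
    have hyT : T ≤ |y| ^ β := by
      have h1 : (T ^ (β⁻¹)) ^ β ≤ |y| ^ β :=
        Real.rpow_le_rpow (Real.rpow_nonneg (by linarith) _) hyR.le hβ0.le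
      rwa [← Real.rpow_mul (by linarith : (0:ℝ) ≤ T), inv_mul_cancel₀ hβ0.ne',
        Real.rpow_one] at h1
    have hval : phi4 C₄ N σ δ (x, y) = C₄ * (-x + N * |y| ^ β) := by
      rw [hβdef]; rfl
    have hNT : N * ((M/C₄ + N)/N) = M/C₄ + N := mul_div_cancel₀ _ hN0.ne'
    have h2 : M/C₄ < -x + N * |y| ^ β := by
      have h3 : N * T ≤ N * |y| ^ β := mul_le_mul_of_nonneg_left hyT hN0.le
      have h4 : N * ((M/C₄ + N)/N + 1) ≤ N * T := mul_le_mul_of_nonneg_left hTr hN0.le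
      nlinarith
    rw [hval]
    have h5 := mul_lt_mul_of_pos_left h2 hC₄
    have h6 : C₄ * (M/C₄) = M := by field_simp
    linarith
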